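/- The matrices P_C and P_N admit the explicit representations P_C = Σ_{i=r+1}^{r+s} (1−σ_i²)⁻¹ Z̃_i Z̃_iᵀ − Σ_{i=r+1}^{r+s} σ_i(1−σ_i²)⁻¹ Z̃_i W̃_iᵀ + Σ_{i=r+s+1}^{p} Z̃_i Z̃_iᵀ and P_N = Σ_{i=r+1}^{r+s} (1−σ_i²)⁻¹ W̃_i W̃_iᵀ − Σ_{i=r+1}^{r+s} σ_i(1−σ_i²)⁻¹ W̃_i Z̃_iᵀ + Σ_{i=r+s+1}^{K} W̃_i W̃_iᵀ. -/

import Mathlib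

open Matrix

noncomputable def specNorm {m n : Type*} [Fintype m] [Fintype n] [DecidableEq n]
    (A : Matrix m n ℝ) : ℝ :=
  ‖LinearMap.toContinuousLinearMap (Matrix.toEuclideanLin A)‖

noncomputable def vnorm {n : Type*} [Fintype n] (v : n → ℝ) : ℝ :=
  Real.sqrt (∑ i, v i ^ 2)


noncomputable def dmat (a b : ℕ) (f : ℕ → ℝ) : Matrix (Fin a) (Fin b) ℝ :=
  Matrix.of fun i j => if (i : ℕ) = (j : ℕ) then f (i : ℕ) else 0

noncomputable def rowf {n p : ℕ} (A : Matrix (Fin n) (Fin p) ℝ) (a : Fin n) (i : ℕ) : ℝ :=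
  if h : i < p then A a ⟨i, h⟩ else 0

lemma dmat_transpose (a b : ℕ) (f : ℕ → ℝ) : (dmat a b f)ᵀ = dmat b a f := by
  ext i j
  simp only [dmat, transpose_apply, of_apply]
  by_cases h : (j : ℕ) = (i : ℕ)
  · simp [h]
  · simp [h, Ne.symm h]

lemma dmat_mul (a b c : ℕ) (f g : ℕ → ℝ) :
    dmat a b f * dmat b c g = dmat a c (fun i => if i < b then f i * g i else 0) := by
  ext i j
  simp only [dmat, Matrix.mul_apply, of_apply]
  by_cases hb : (i : ℕ) < b
  · rw [Finset.sum_eq_single (⟨(i : ℕ), hb⟩ : Fin b)]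
    · by_cases hij : (i : ℕ) = (j : ℕ)
      · simp [← hij, hb]
      · simp [hij]
    · intro t _ ht
      have : ¬ ((i : ℕ) = (t : ℕ)) := fun h => ht (by ext; simp [← h])
      simp [this]
    · simp
  · rw [Finset.sum_eq_zero]
    · by_cases hij : (i : ℕ) = (j : ℕ)
      · simp [← hij, hb]
      · simp [hij]
    · intro t _
      have : ¬ ((i : ℕ) = (t : ℕ)) := fun h => hb (h ▸ t.2)
      simp [this]

lemma sum_mul_dmat {q k : ℕ} (f : ℕ → ℝ) (v : Fin q → ℝ) (j : Fin k) :
    ∑ t : Fin q, v t * dmat q k f t j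
      = if h : (j : ℕ) < q then v ⟨(j : ℕ), h⟩ * f (j : ℕ) else 0 := by
  by_cases h : (j : ℕ) < q
  · rw [dif_pos h, Finset.sum_eq_single (⟨(j : ℕ), h⟩ : Fin q)]
    · simp [dmat]
    · intro t _ ht
      have : ¬ ((t : ℕ) = (j : ℕ)) := fun h' => ht (by ext; simp [h'])
      simp [dmat, this]
    · simp
  · rw [dif_neg h, Finset.sum_eq_zero]
    intro t _
    have : ¬ ((t : ℕ) = (j : ℕ)) := fun h' => h (h' ▸ t.2)
    simp [dmat, this]

lemma sum_mul_dmat_sq {q : ℕ} (f : ℕ → ℝ) (v : Fin q → ℝ) (j : Fin q) :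
    ∑ t : Fin q, v t * dmat q q f t j = v j * f (j : ℕ) := by
  rw [sum_mul_dmat, dif_pos j.2]

lemma inv_blocks (q k s : ℕ) (σ : ℕ → ℝ) (hq : s ≤ q) (hk : s ≤ k)
    (hzero : ∀ i, s ≤ i → σ i = 0) (hne : ∀ i, 1 - σ i ^ 2 ≠ 0) :
    (fromBlocks (1 : Matrix (Fin q) (Fin q) ℝ) (dmat q k σ) (dmat q k σ)ᵀ 1) *
      (fromBlocks (dmat q q fun i => (1 - σ i ^ 2)⁻¹)
        (dmat q k fun i => -(σ i * (1 - σ i ^ 2)⁻¹))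
        (dmat q k fun i => -(σ i * (1 - σ i ^ 2)⁻¹))ᵀ
        (dmat k k fun i => (1 - σ i ^ 2)⁻¹)) = 1 := by
  rw [fromBlocks_multiply, dmat_transpose, dmat_transpose, ← fromBlocks_one]
  have e11 : (1 : Matrix (Fin q) (Fin q) ℝ) * (dmat q q fun i => (1 - σ i ^ 2)⁻¹)
      + dmat q k σ * dmat k q (fun i => -(σ i * (1 - σ i ^ 2)⁻¹)) = 1 := by
    rw [Matrix.one_mul, dmat_mul]
    ext i j
    by_cases hij : (i : ℕ) = (j : ℕ)
    · have hij' : i = j := by ext; exact hij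
      subst hij'
      rw [Matrix.one_apply_eq]
      simp only [dmat, Matrix.add_apply, of_apply, if_pos rfl]
      by_cases hik : (i : ℕ) < k
      · rw [if_pos hik]
        have := hne (i : ℕ)
        simp only [↓reduceIte]
        field_simp
        ring
      · rw [if_neg hik]
        have h0 : σ (i : ℕ) = 0 := hzero _ (le_trans hk (le_of_not_gt hik))
        simp [h0]
    · have hij' : ¬ (i = j) := fun h => hij (by rw [h])
      simp [dmat, hij, Matrix.one_apply_ne hij']
  have e12 : (1 : Matrix (Fin q) (Fin q) ℝ) * (dmat q k fun i => -(σ i * (1 - σ i ^ 2)⁻¹))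
      + dmat q k σ * dmat k k (fun i => (1 - σ i ^ 2)⁻¹) = 0 := by
    rw [Matrix.one_mul, dmat_mul]
    ext i j
    by_cases hij : (i : ℕ) = (j : ℕ)
    · simp only [dmat, Matrix.add_apply, of_apply, if_pos hij, Matrix.zero_apply]
      by_cases hik : (i : ℕ) < k
      · rw [if_pos hik]; ring
      · rw [if_neg hik]
        have h0 : σ (i : ℕ) = 0 := hzero _ (le_trans hk (le_of_not_gt hik))
        simp [h0]
    · simp [dmat, hij]
  have e21 : dmat k q σ * (dmat q q fun i => (1 - σ i ^ 2)⁻¹)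
      + (1 : Matrix (Fin k) (Fin k) ℝ) * dmat k q (fun i => -(σ i * (1 - σ i ^ 2)⁻¹)) = 0 := by
    rw [Matrix.one_mul, dmat_mul]
    ext i j
    by_cases hij : (i : ℕ) = (j : ℕ)
    · simp only [dmat, Matrix.add_apply, of_apply, if_pos hij, Matrix.zero_apply]
      by_cases hiq : (i : ℕ) < q
      · rw [if_pos hiq]; ring
      · rw [if_neg hiq]
        have h0 : σ (i : ℕ) = 0 := hzero _ (le_trans hq (le_of_not_gt hiq))
        simp [h0]
    · simp [dmat, hij]
  have e22 : dmat k q σ * (dmat q k fun i => -(σ i * (1 - σ i ^ 2)⁻¹))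
      + (1 : Matrix (Fin k) (Fin k) ℝ) * dmat k k (fun i => (1 - σ i ^ 2)⁻¹) = 1 := by
    rw [Matrix.one_mul, dmat_mul]
    ext i j
    by_cases hij : (i : ℕ) = (j : ℕ)
    · have hij' : i = j := by ext; exact hij
      subst hij'
      rw [Matrix.one_apply_eq]
      simp only [dmat, Matrix.add_apply, of_apply, if_pos rfl]
      by_cases hiq : (i : ℕ) < q
      · rw [if_pos hiq]
        have := hne (i : ℕ)
        simp only [↓reduceIte]
        field_simp
        ring
      · rw [if_neg hiq]
        have h0 : σ (i : ℕ) = 0 := hzero _ (le_trans hq (le_of_not_gt hiq))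
        simp [h0]
    · have hij' : ¬ (i = j) := fun h => hij (by rw [h])
      simp [dmat, hij, Matrix.one_apply_ne hij']
  rw [e11, e12, e21, e22]

theorem stmt_2
    (n p K r s : ℕ) (hs : 1 ≤ s) (hrp : r + s ≤ p) (hrK : r + s ≤ K)
    (hpn : p ≤ n) (hKn : K ≤ n)
    (Z : Matrix (Fin n) (Fin p) ℝ) (W : Matrix (Fin n) (Fin K) ℝ)
    (hZ : Zᵀ * Z = 1) (hW : Wᵀ * W = 1)
    (U : Matrix (Fin p) (Fin p) ℝ) (V : Matrix (Fin K) (Fin K) ℝ)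
    (hU : Uᵀ * U = 1) (hV : Vᵀ * V = 1)
    (σ : ℕ → ℝ)
    (hσone : ∀ i, i < r → σ i = 1)
    (hσlt : σ r < 1)
    (hσanti : ∀ i j, i ≤ j → σ j ≤ σ i)
    (hσpos : 0 < σ (r + s - 1))
    (hσzero : ∀ i, r + s ≤ i → σ i = 0)
    (hSVD : Zᵀ * W
      = U * (Matrix.of fun (i : Fin p) (j : Fin K) =>
          if (i : ℕ) = (j : ℕ) then σ (i : ℕ) else 0) * Vᵀ)
    (Zt : Matrix (Fin n) (Fin p) ℝ) (hZt : Zt = Z * U)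
    (Wt : Matrix (Fin n) (Fin K) ℝ) (hWt : Wt = W * V)
    (M : Matrix (Fin n) (Fin (p - r) ⊕ Fin (K - r)) ℝ)
    (hMl : ∀ (a : Fin n) (j : Fin (p - r)),
      M a (Sum.inl j) = Zt a ⟨r + j.1, by have := j.2; omega⟩)
    (hMr : ∀ (a : Fin n) (j : Fin (K - r)),
      M a (Sum.inr j) = Wt a ⟨r + j.1, by have := j.2; omega⟩)
    (PR PC PN : Matrix (Fin n) (Fin n) ℝ)
    (hPR : PR = ∑ i ∈ (Finset.range r).attach,
      Matrix.vecMulVec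
        (fun a : Fin n => Zt a ⟨i.1, by have := Finset.mem_range.mp i.2; omega⟩)
        (fun a : Fin n => Zt a ⟨i.1, by have := Finset.mem_range.mp i.2; omega⟩))
    (hPC : PC = (Matrix.of fun (a : Fin n) (j : Fin (p - r) ⊕ Fin (K - r)) =>
        Sum.elim (fun j' : Fin (p - r) => Zt a ⟨r + j'.1, by have := j'.2; omega⟩)
                 (fun _ : Fin (K - r) => (0 : ℝ)) j) * (Mᵀ * M)⁻¹ * Mᵀ)
    (hPN : PN = (Matrix.of fun (a : Fin n) (j : Fin (p - r) ⊕ Fin (K - r)) =>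
        Sum.elim (fun _ : Fin (p - r) => (0 : ℝ))
                 (fun j' : Fin (K - r) => Wt a ⟨r + j'.1, by have := j'.2; omega⟩) j)
        * (Mᵀ * M)⁻¹ * Mᵀ)
    :
    PC = (∑ i ∈ (Finset.Ico r (r + s)).attach,
            (1 - σ i.1 ^ 2)⁻¹ • Matrix.vecMulVec
              (fun a : Fin n => Zt a ⟨i.1, by have := (Finset.mem_Ico.mp i.2).2; omega⟩)
              (fun a : Fin n => Zt a ⟨i.1, by have := (Finset.mem_Ico.mp i.2).2; omega⟩))
       - (∑ i ∈ (Finset.Ico r (r + s)).attach,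
            (σ i.1 / (1 - σ i.1 ^ 2)) • Matrix.vecMulVec
              (fun a : Fin n => Zt a ⟨i.1, by have := (Finset.mem_Ico.mp i.2).2; omega⟩)
              (fun a : Fin n => Wt a ⟨i.1, by have := (Finset.mem_Ico.mp i.2).2; omega⟩))
       + (∑ i ∈ (Finset.Ico (r + s) p).attach,
            Matrix.vecMulVec
              (fun a : Fin n => Zt a ⟨i.1, (Finset.mem_Ico.mp i.2).2⟩)
              (fun a : Fin n => Zt a ⟨i.1, (Finset.mem_Ico.mp i.2).2⟩))
    ∧ PN = (∑ i ∈ (Finset.Ico r (r + s)).attach,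
            (1 - σ i.1 ^ 2)⁻¹ • Matrix.vecMulVec
              (fun a : Fin n => Wt a ⟨i.1, by have := (Finset.mem_Ico.mp i.2).2; omega⟩)
              (fun a : Fin n => Wt a ⟨i.1, by have := (Finset.mem_Ico.mp i.2).2; omega⟩))
       - (∑ i ∈ (Finset.Ico r (r + s)).attach,
            (σ i.1 / (1 - σ i.1 ^ 2)) • Matrix.vecMulVec
              (fun a : Fin n => Wt a ⟨i.1, by have := (Finset.mem_Ico.mp i.2).2; omega⟩)
              (fun a : Fin n => Zt a ⟨i.1, by have := (Finset.mem_Ico.mp i.2).2; omega⟩))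
       + (∑ i ∈ (Finset.Ico (r + s) K).attach,
            Matrix.vecMulVec
              (fun a : Fin n => Wt a ⟨i.1, (Finset.mem_Ico.mp i.2).2⟩)
              (fun a : Fin n => Wt a ⟨i.1, (Finset.mem_Ico.mp i.2).2⟩)) := by
  classical
  have hrp0 : r ≤ p := by omega
  have hrK0 : r ≤ K := by omega
  have hσnn : ∀ i, 0 ≤ σ i := by
    intro i
    rcases lt_or_ge i (r + s) with h | h
    · have h1 : σ (r + s - 1) ≤ σ i := hσanti i (r + s - 1) (by omega)
      linarith
    · rw [hσzero i h]
  have hσlt1 : ∀ i, r ≤ i → σ i < 1 := fun i h => lt_of_le_of_lt (hσanti r i h) hσlt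
  have hne : ∀ i, 1 - σ (r + i) ^ 2 ≠ 0 := by
    intro i
    have h1 := hσnn (r + i)
    have h2 := hσlt1 (r + i) (by omega)
    nlinarith
  set S : Matrix (Fin p) (Fin K) ℝ :=
    Matrix.of (fun (i : Fin p) (j : Fin K) => if (i : ℕ) = (j : ℕ) then σ (i : ℕ) else 0)
    with hSdef
  have hZtZ : Ztᵀ * Zt = 1 := by
    rw [hZt, transpose_mul, Matrix.mul_assoc, ← Matrix.mul_assoc Zᵀ Z U, hZ, Matrix.one_mul, hU]
  have hWtW : Wtᵀ * Wt = 1 := by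
    rw [hWt, transpose_mul, Matrix.mul_assoc, ← Matrix.mul_assoc Wᵀ W V, hW, Matrix.one_mul, hV]
  have hZtW : Ztᵀ * Wt = S := by
    rw [hZt, hWt, transpose_mul, Matrix.mul_assoc, ← Matrix.mul_assoc Zᵀ W V, hSVD,
      Matrix.mul_assoc (U * S) Vᵀ V, hV, Matrix.mul_one, ← Matrix.mul_assoc, hU, Matrix.one_mul]
  have hWtZ : Wtᵀ * Zt = Sᵀ := by
    rw [← hZtW, transpose_mul, transpose_transpose]
  have hZtZe : ∀ i j : Fin p, (∑ x, Zt x i * Zt x j) = if i = j then (1 : ℝ) else 0 := by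
    intro i j
    have h := congrFun (congrFun hZtZ i) j
    simpa [Matrix.mul_apply, Matrix.transpose_apply, Matrix.one_apply] using h
  have hWtWe : ∀ i j : Fin K, (∑ x, Wt x i * Wt x j) = if i = j then (1 : ℝ) else 0 := by
    intro i j
    have h := congrFun (congrFun hWtW i) j
    simpa [Matrix.mul_apply, Matrix.transpose_apply, Matrix.one_apply] using h
  have hZtWe : ∀ (i : Fin p) (j : Fin K),
      (∑ x, Zt x i * Wt x j) = if (i : ℕ) = (j : ℕ) then σ (i : ℕ) else 0 := by
    intro i j
    have h := congrFun (congrFun hZtW i) j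
    simpa [Matrix.mul_apply, Matrix.transpose_apply, hSdef] using h
  have hWtZe : ∀ (i : Fin K) (j : Fin p),
      (∑ x, Wt x i * Zt x j) = if (j : ℕ) = (i : ℕ) then σ (j : ℕ) else 0 := by
    intro i j
    have h := congrFun (congrFun hWtZ i) j
    simpa [Matrix.mul_apply, Matrix.transpose_apply, hSdef] using h
  have hG : Mᵀ * M = fromBlocks (1 : Matrix (Fin (p - r)) (Fin (p - r)) ℝ)
      (dmat (p - r) (K - r) fun i => σ (r + i))
      (dmat (p - r) (K - r) fun i => σ (r + i))ᵀ
      (1 : Matrix (Fin (K - r)) (Fin (K - r)) ℝ) := by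
    ext x y
    cases x with
    | inl i =>
      cases y with
      | inl j =>
        simp only [Matrix.mul_apply, transpose_apply, hMl, fromBlocks_apply₁₁]
        rw [hZtZe]
        by_cases hij : i = j
        · subst hij; simp
        · have hv : (i : ℕ) ≠ (j : ℕ) := fun h => hij (Fin.ext h)
          rw [if_neg, Matrix.one_apply_ne hij]
          intro hc
          simp only [Fin.mk.injEq] at hc
          exact hv (by omega)
      | inr j =>
        simp only [Matrix.mul_apply, transpose_apply, hMl, hMr, fromBlocks_apply₁₂]
        rw [hZtWe]
        simp only [dmat, of_apply]
        by_cases hij : (i : ℕ) = (j : ℕ)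
        · simp [hij]
        · simp [hij]
    | inr i =>
      cases y with
      | inl j =>
        simp only [Matrix.mul_apply, transpose_apply, hMl, hMr, fromBlocks_apply₂₁,
          Matrix.transpose_apply]
        rw [hWtZe]
        simp only [dmat, of_apply]
        by_cases hij : (j : ℕ) = (i : ℕ)
        · simp [hij]
        · simp [hij]
      | inr j =>
        simp only [Matrix.mul_apply, transpose_apply, hMr, fromBlocks_apply₂₂]
        rw [hWtWe]
        by_cases hij : i = j
        · subst hij; simp
        · have hv : (i : ℕ) ≠ (j : ℕ) := fun h => hij (Fin.ext h)
          rw [if_neg, Matrix.one_apply_ne hij]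
          intro hc
          simp only [Fin.mk.injEq] at hc
          exact hv (by omega)
  have hNinv : (Mᵀ * M)⁻¹ = fromBlocks
      (dmat (p - r) (p - r) fun i => (1 - σ (r + i) ^ 2)⁻¹)
      (dmat (p - r) (K - r) fun i => -(σ (r + i) * (1 - σ (r + i) ^ 2)⁻¹))
      (dmat (p - r) (K - r) fun i => -(σ (r + i) * (1 - σ (r + i) ^ 2)⁻¹))ᵀ
      (dmat (K - r) (K - r) fun i => (1 - σ (r + i) ^ 2)⁻¹) := by
    rw [hG]
    exact Matrix.inv_eq_right_inv
      (inv_blocks (p - r) (K - r) s (fun i => σ (r + i)) (by omega) (by omega)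
        (fun i hi => hσzero _ (by omega)) hne)
  have hPCentry : ∀ a b : Fin n, PC a b =
      (∑ i ∈ Finset.Ico r p, (1 - σ i ^ 2)⁻¹ * (rowf Zt a i * rowf Zt b i))
      + ∑ i ∈ Finset.Ico r (r + s),
          -((σ i / (1 - σ i ^ 2)) * (rowf Zt a i * rowf Wt b i)) := by
    intro a b
    rw [hPC, hNinv]
    simp only [Matrix.mul_apply, Matrix.transpose_apply, Fintype.sum_sum_type, Matrix.of_apply,
      Sum.elim_inl, Sum.elim_inr, fromBlocks_apply₁₁, fromBlocks_apply₁₂, fromBlocks_apply₂₁,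
      fromBlocks_apply₂₂, zero_mul, Finset.sum_const_zero, add_zero, zero_add, hMl, hMr,
      sum_mul_dmat_sq, sum_mul_dmat]
    congr 1
    · rw [Finset.sum_Ico_eq_sum_range, ← Fin.sum_univ_eq_sum_range]
      refine Finset.sum_congr rfl fun j _ => ?_
      have hjp : r + (j : ℕ) < p := by have := j.2; omega
      simp only [rowf]
      rw [dif_pos hjp, dif_pos hjp]
      ring
    · rw [show (∑ i ∈ Finset.Ico r (r + s),
            -((σ i / (1 - σ i ^ 2)) * (rowf Zt a i * rowf Wt b i)))
          = ∑ i ∈ Finset.Ico r K,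
            -((σ i / (1 - σ i ^ 2)) * (rowf Zt a i * rowf Wt b i)) from
        Finset.sum_subset (Finset.Ico_subset_Ico le_rfl hrK) (fun i hiK hin => by
          have hri : r + s ≤ i := by
            simp only [Finset.mem_Ico] at hiK hin; omega
          simp [hσzero i hri])]
      rw [Finset.sum_Ico_eq_sum_range, ← Fin.sum_univ_eq_sum_range]
      refine Finset.sum_congr rfl fun j _ => ?_
      have hjK : r + (j : ℕ) < K := by have := j.2; omega
      by_cases hjq : (j : ℕ) < p - r
      · rw [dif_pos hjq]
        have hjp : r + (j : ℕ) < p := by omega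
        simp only [rowf]
        rw [dif_pos hjp, dif_pos hjK, div_eq_mul_inv]
        ring
      · rw [dif_neg hjq]
        have h0 : σ (r + (j : ℕ)) = 0 := hσzero _ (by omega)
        simp [h0]
  have hPNentry : ∀ a b : Fin n, PN a b =
      (∑ i ∈ Finset.Ico r (r + s),
          -((σ i / (1 - σ i ^ 2)) * (rowf Wt a i * rowf Zt b i)))
      + ∑ i ∈ Finset.Ico r K, (1 - σ i ^ 2)⁻¹ * (rowf Wt a i * rowf Wt b i) := by
    intro a b
    rw [hPN, hNinv, dmat_transpose]
    simp only [Matrix.mul_apply, Matrix.transpose_apply, Fintype.sum_sum_type, Matrix.of_apply,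
      Sum.elim_inl, Sum.elim_inr, fromBlocks_apply₁₁, fromBlocks_apply₁₂, fromBlocks_apply₂₁,
      fromBlocks_apply₂₂, zero_mul, Finset.sum_const_zero, add_zero, zero_add, hMl, hMr,
      sum_mul_dmat_sq, sum_mul_dmat]
    congr 1
    · rw [show (∑ i ∈ Finset.Ico r (r + s),
            -((σ i / (1 - σ i ^ 2)) * (rowf Wt a i * rowf Zt b i)))
          = ∑ i ∈ Finset.Ico r p,
            -((σ i / (1 - σ i ^ 2)) * (rowf Wt a i * rowf Zt b i)) from
        Finset.sum_subset (Finset.Ico_subset_Ico le_rfl hrp) (fun i hiK hin => by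
          have hri : r + s ≤ i := by
            simp only [Finset.mem_Ico] at hiK hin; omega
          simp [hσzero i hri])]
      rw [Finset.sum_Ico_eq_sum_range, ← Fin.sum_univ_eq_sum_range]
      refine Finset.sum_congr rfl fun j _ => ?_
      have hjp : r + (j : ℕ) < p := by have := j.2; omega
      by_cases hjk : (j : ℕ) < K - r
      · rw [dif_pos hjk]
        have hjK : r + (j : ℕ) < K := by omega
        simp only [rowf]
        rw [dif_pos hjK, dif_pos hjp, div_eq_mul_inv]
        ring
      · rw [dif_neg hjk]
        have h0 : σ (r + (j : ℕ)) = 0 := hσzero _ (by omega)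
        simp [h0]
    · rw [Finset.sum_Ico_eq_sum_range, ← Fin.sum_univ_eq_sum_range]
      refine Finset.sum_congr rfl fun j _ => ?_
      have hjK : r + (j : ℕ) < K := by have := j.2; omega
      simp only [rowf]
      rw [dif_pos hjK, dif_pos hjK]
      ring
  have T1 : (∑ i ∈ (Finset.Ico r (r + s)).attach,
            (1 - σ i.1 ^ 2)⁻¹ • Matrix.vecMulVec
              (fun a : Fin n => Zt a ⟨i.1, by have := (Finset.mem_Ico.mp i.2).2; omega⟩)
              (fun a : Fin n => Zt a ⟨i.1, by have := (Finset.mem_Ico.mp i.2).2; omega⟩))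
      = Matrix.of fun a b : Fin n =>
          ∑ i ∈ Finset.Ico r (r + s), (1 - σ i ^ 2)⁻¹ * (rowf Zt a i * rowf Zt b i) := by
    ext a b
    simp only [Matrix.sum_apply, Matrix.smul_apply, vecMulVec_apply, smul_eq_mul, of_apply]
    rw [← Finset.sum_attach (Finset.Ico r (r + s))
      (fun i => (1 - σ i ^ 2)⁻¹ * (rowf Zt a i * rowf Zt b i))]
    refine Finset.sum_congr rfl fun i _ => ?_
    have hip : i.1 < p := by have := (Finset.mem_Ico.mp i.2).2; omega
    simp only [rowf]
    rw [dif_pos hip, dif_pos hip]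
  have T2 : (∑ i ∈ (Finset.Ico r (r + s)).attach,
            (σ i.1 / (1 - σ i.1 ^ 2)) • Matrix.vecMulVec
              (fun a : Fin n => Zt a ⟨i.1, by have := (Finset.mem_Ico.mp i.2).2; omega⟩)
              (fun a : Fin n => Wt a ⟨i.1, by have := (Finset.mem_Ico.mp i.2).2; omega⟩))
      = Matrix.of fun a b : Fin n =>
          ∑ i ∈ Finset.Ico r (r + s), (σ i / (1 - σ i ^ 2)) * (rowf Zt a i * rowf Wt b i) := by
    ext a b
    simp only [Matrix.sum_apply, Matrix.smul_apply, vecMulVec_apply, smul_eq_mul, of_apply]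
    rw [← Finset.sum_attach (Finset.Ico r (r + s))
      (fun i => (σ i / (1 - σ i ^ 2)) * (rowf Zt a i * rowf Wt b i))]
    refine Finset.sum_congr rfl fun i _ => ?_
    have hip : i.1 < p := by have := (Finset.mem_Ico.mp i.2).2; omega
    have hiK : i.1 < K := by have := (Finset.mem_Ico.mp i.2).2; omega
    simp only [rowf]
    rw [dif_pos hip, dif_pos hiK]
  have T3 : (∑ i ∈ (Finset.Ico (r + s) p).attach,
            Matrix.vecMulVec
              (fun a : Fin n => Zt a ⟨i.1, (Finset.mem_Ico.mp i.2).2⟩)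
              (fun a : Fin n => Zt a ⟨i.1, (Finset.mem_Ico.mp i.2).2⟩))
      = Matrix.of fun a b : Fin n =>
          ∑ i ∈ Finset.Ico (r + s) p, rowf Zt a i * rowf Zt b i := by
    ext a b
    simp only [Matrix.sum_apply, vecMulVec_apply, of_apply]
    rw [← Finset.sum_attach (Finset.Ico (r + s) p) (fun i => rowf Zt a i * rowf Zt b i)]
    refine Finset.sum_congr rfl fun i _ => ?_
    have hip : i.1 < p := (Finset.mem_Ico.mp i.2).2
    simp only [rowf]
    rw [dif_pos hip, dif_pos hip]
  have T4 : (∑ i ∈ (Finset.Ico r (r + s)).attach,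
            (1 - σ i.1 ^ 2)⁻¹ • Matrix.vecMulVec
              (fun a : Fin n => Wt a ⟨i.1, by have := (Finset.mem_Ico.mp i.2).2; omega⟩)
              (fun a : Fin n => Wt a ⟨i.1, by have := (Finset.mem_Ico.mp i.2).2; omega⟩))
      = Matrix.of fun a b : Fin n =>
          ∑ i ∈ Finset.Ico r (r + s), (1 - σ i ^ 2)⁻¹ * (rowf Wt a i * rowf Wt b i) := by
    ext a b
    simp only [Matrix.sum_apply, Matrix.smul_apply, vecMulVec_apply, smul_eq_mul, of_apply]
    rw [← Finset.sum_attach (Finset.Ico r (r + s))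
      (fun i => (1 - σ i ^ 2)⁻¹ * (rowf Wt a i * rowf Wt b i))]
    refine Finset.sum_congr rfl fun i _ => ?_
    have hiK : i.1 < K := by have := (Finset.mem_Ico.mp i.2).2; omega
    simp only [rowf]
    rw [dif_pos hiK, dif_pos hiK]
  have T5 : (∑ i ∈ (Finset.Ico r (r + s)).attach,
            (σ i.1 / (1 - σ i.1 ^ 2)) • Matrix.vecMulVec
              (fun a : Fin n => Wt a ⟨i.1, by have := (Finset.mem_Ico.mp i.2).2; omega⟩)
              (fun a : Fin n => Zt a ⟨i.1, by have := (Finset.mem_Ico.mp i.2).2; omega⟩))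
      = Matrix.of fun a b : Fin n =>
          ∑ i ∈ Finset.Ico r (r + s), (σ i / (1 - σ i ^ 2)) * (rowf Wt a i * rowf Zt b i) := by
    ext a b
    simp only [Matrix.sum_apply, Matrix.smul_apply, vecMulVec_apply, smul_eq_mul, of_apply]
    rw [← Finset.sum_attach (Finset.Ico r (r + s))
      (fun i => (σ i / (1 - σ i ^ 2)) * (rowf Wt a i * rowf Zt b i))]
    refine Finset.sum_congr rfl fun i _ => ?_
    have hip : i.1 < p := by have := (Finset.mem_Ico.mp i.2).2; omega
    have hiK : i.1 < K := by have := (Finset.mem_Ico.mp i.2).2; omega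
    simp only [rowf]
    rw [dif_pos hiK, dif_pos hip]
  have T6 : (∑ i ∈ (Finset.Ico (r + s) K).attach,
            Matrix.vecMulVec
              (fun a : Fin n => Wt a ⟨i.1, (Finset.mem_Ico.mp i.2).2⟩)
              (fun a : Fin n => Wt a ⟨i.1, (Finset.mem_Ico.mp i.2).2⟩))
      = Matrix.of fun a b : Fin n =>
          ∑ i ∈ Finset.Ico (r + s) K, rowf Wt a i * rowf Wt b i := by
    ext a b
    simp only [Matrix.sum_apply, vecMulVec_apply, of_apply]
    rw [← Finset.sum_attach (Finset.Ico (r + s) K) (fun i => rowf Wt a i * rowf Wt b i)]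
    refine Finset.sum_congr rfl fun i _ => ?_
    have hiK : i.1 < K := (Finset.mem_Ico.mp i.2).2
    simp only [rowf]
    rw [dif_pos hiK, dif_pos hiK]
  constructor
  · rw [T1, T2, T3]
    ext a b
    simp only [Matrix.sub_apply, Matrix.add_apply, Matrix.of_apply]
    rw [hPCentry a b]
    rw [← Finset.sum_Ico_consecutive
      (fun i => (1 - σ i ^ 2)⁻¹ * (rowf Zt a i * rowf Zt b i)) (show r ≤ r + s by omega) hrp]
    have e3 : ∑ i ∈ Finset.Ico (r + s) p, (1 - σ i ^ 2)⁻¹ * (rowf Zt a i * rowf Zt b i)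
        = ∑ i ∈ Finset.Ico (r + s) p, rowf Zt a i * rowf Zt b i :=
      Finset.sum_congr rfl fun i hi => by
        have h0 : σ i = 0 := hσzero i (Finset.mem_Ico.mp hi).1
        simp [h0]
    rw [e3, Finset.sum_neg_distrib]
    ring
  · rw [T4, T5, T6]
    ext a b
    simp only [Matrix.sub_apply, Matrix.add_apply, Matrix.of_apply]
    rw [hPNentry a b]
    rw [← Finset.sum_Ico_consecutive
      (fun i => (1 - σ i ^ 2)⁻¹ * (rowf Wt a i * rowf Wt b i)) (show r ≤ r + s by omega) hrK]
    have e3 : ∑ i ∈ Finset.Ico (r + s) K, (1 - σ i ^ 2)⁻¹ * (rowf Wt a i * rowf Wt b i)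
        = ∑ i ∈ Finset.Ico (r + s) K, rowf Wt a i * rowf Wt b i :=
      Finset.sum_congr rfl fun i hi => by
        have h0 : σ i = 0 := hσzero i (Finset.mem_Ico.mp hi).1
        simp [h0]
    rw [e3, Finset.sum_neg_distrib]
    ring
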